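/- Let 0<α,β<1 and 1<p,q<∞ in the plane ℝ×ℝ. Define σ = δ_{(0,0)} (Dirac mass at the origin) and, for ρ>0, ω_ρ = Σ_{k≥1} δ_{(2^k, 2^{−ρk})}. If ρ ≤ (1−α)/(1−β), then the product Muckenhoupt characteristic A^{(α,β),(1,1)}_{p,q}(σ,ω_ρ) = sup over rectangles I×J of |I|^{α−1}|J|^{β−1} ω_ρ(I×J)^{1/q} σ(I×J)^{1/p'} is finite. -/

import Mathlib

open MeasureTheory ENNReal Set

noncomputable section

/-- The measure `ω_ρ = Σ_{k≥1} δ_{(2^k, 2^{−ρk})}` in the plane. -/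
noncomputable def omegaRho (ρ : ℝ) : Measure (ℝ × ℝ) :=
  Measure.sum fun k : ℕ =>
    Measure.dirac (((2 : ℝ) ^ ((k : ℝ) + 1), (2 : ℝ) ^ (-(ρ * ((k : ℝ) + 1)))) : ℝ × ℝ)

/-- **Finiteness of the rectangle characteristic for the Dirac/point-mass pair.**
Let `0 < α, β < 1`, `1 < p, q < ∞`, `σ = δ_{(0,0)}` and `ω_ρ = Σ_{k≥1} δ_{(2^k,2^{−ρk})}`.
If `0 < ρ ≤ (1−α)/(1−β)`, then the product Muckenhoupt characteristic
`A^{(α,β),(1,1)}_{p,q}(σ, ω_ρ) = sup_{I×J} |I|^{α−1}|J|^{β−1} ω_ρ(I×J)^{1/q} σ(I×J)^{1/p'}`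
is finite. -/
theorem dirac_example_characteristic_finite (α β p q ρ : ℝ)
    (hα : 0 < α) (hα1 : α < 1) (hβ : 0 < β) (hβ1 : β < 1) (hp : 1 < p) (hq : 1 < q)
    (hρ : 0 < ρ) (hρle : ρ ≤ (1 - α) / (1 - β)) :
    ∃ A : ℝ≥0∞, A ≠ ∞ ∧
      ∀ a b c d : ℝ, a < b → c < d →
        ENNReal.ofReal ((b - a) ^ (α - 1) * (d - c) ^ (β - 1)) *
            (omegaRho ρ (Icc a b ×ˢ Icc c d)) ^ (1 / q) *
            (Measure.dirac ((0, 0) : ℝ × ℝ) (Icc a b ×ˢ Icc c d)) ^ (1 - 1 / p)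
          ≤ A := by
  set r : ℝ := (2 : ℝ) ^ (1 - α) with hrdef
  have h1α : (0:ℝ) < 1 - α := by linarith
  have hr1 : 1 < r := Real.one_lt_rpow_iff_of_pos two_pos |>.2 (Or.inl ⟨one_lt_two, h1α⟩)
  have hr0 : 0 < r := lt_trans one_pos hr1
  have hrsub : 0 < r - 1 := by linarith
  refine ⟨ENNReal.ofReal (r / (r - 1)), ENNReal.ofReal_ne_top, ?_⟩
  intro a b c d hab hcd
  set R : Set (ℝ × ℝ) := Icc a b ×ˢ Icc c d with hRdef
  have hRm : MeasurableSet R := measurableSet_Icc.prod measurableSet_Icc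
  by_cases h0 : ((0 : ℝ), (0 : ℝ)) ∈ R
  swap
  · rw [Measure.dirac_apply' _ hRm, Set.indicator_of_notMem h0,
      ENNReal.zero_rpow_of_pos (by
        have : 1 / p < 1 := (div_lt_one (by linarith)).2 hp
        linarith), mul_zero]
    exact zero_le
  rw [Measure.dirac_apply' _ hRm, Set.indicator_of_mem h0, Pi.one_apply,
    ENNReal.one_rpow, mul_one]
  have hb0 : (0:ℝ) ≤ b := h0.1.2
  have ha0 : a ≤ 0 := h0.1.1
  have hc0 : c ≤ 0 := h0.2.1
  set P : ℕ → ℝ × ℝ := fun k =>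
    (((2 : ℝ) ^ ((k : ℝ) + 1), (2 : ℝ) ^ (-(ρ * ((k : ℝ) + 1)))) : ℝ × ℝ) with hPdef
  have hω : omegaRho ρ R = ∑' k : ℕ, Measure.dirac (P k) R := Measure.sum_apply _ hRm
  by_cases hz : omegaRho ρ R = 0
  · rw [hz, ENNReal.zero_rpow_of_pos (one_div_pos.2 (by linarith : (0:ℝ) < q)), mul_zero]
    exact zero_le
  -- there is a point of ω in R
  obtain ⟨k₀, hk₀⟩ : ∃ k : ℕ, Measure.dirac (P k) R ≠ 0 := by
    by_contra h
    push_neg at h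
    exact hz (by rw [hω]; exact ENNReal.tsum_eq_zero.2 h)
  have hk₀mem : P k₀ ∈ R := by
    by_contra hmem
    exact hk₀ (by rw [Measure.dirac_apply' _ hRm, Set.indicator_of_notMem hmem])
  have hb2 : (2:ℝ) ≤ b := by
    have h1 : (2:ℝ) ^ (1:ℝ) ≤ (2:ℝ) ^ ((k₀ : ℝ) + 1) :=
      Real.rpow_le_rpow_of_exponent_le one_le_two (by linarith [(Nat.cast_nonneg k₀ : (0:ℝ) ≤ (k₀:ℝ))])
    have := hk₀mem.1.2
    rw [Real.rpow_one] at h1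
    exact le_trans h1 this
  have hbpos : (0:ℝ) < b := by linarith
  -- ω(R)^{1/q} ≤ ω(R)
  have hωge1 : 1 ≤ omegaRho ρ R := by
    rw [hω]
    calc (1 : ℝ≥0∞) = Measure.dirac (P k₀) R := by
          rw [Measure.dirac_apply' _ hRm, Set.indicator_of_mem hk₀mem, Pi.one_apply]
      _ ≤ ∑' k : ℕ, Measure.dirac (P k) R := ENNReal.le_tsum k₀
  have hpow : (omegaRho ρ R) ^ (1 / q : ℝ) ≤ omegaRho ρ R := by
    calc (omegaRho ρ R) ^ (1 / q : ℝ) ≤ (omegaRho ρ R) ^ (1 : ℝ) :=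
          ENNReal.rpow_le_rpow_of_exponent_le hωge1
            (by rw [div_le_one (by linarith)]; linarith)
      _ = omegaRho ρ R := ENNReal.rpow_one _
  set N : ℕ := ⌊Real.logb 2 b⌋₊ with hNdef
  have hlogb0 : 0 ≤ Real.logb 2 b := Real.logb_nonneg one_lt_two (by linarith)
  have hρβ : ρ * (1 - β) ≤ 1 - α := by
    rw [le_div_iff₀ (by linarith : (0:ℝ) < 1 - β)] at hρle
    exact hρle
  -- per-term bound
  have hterm : ∀ k : ℕ,
      ENNReal.ofReal ((b - a) ^ (α - 1) * (d - c) ^ (β - 1)) * Measure.dirac (P k) R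
        ≤ if k < N then ENNReal.ofReal (b ^ (α - 1)) * ENNReal.ofReal (r ^ (k + 1)) else 0 := by
    intro k
    by_cases hmem : P k ∈ R
    · have hx : (2:ℝ) ^ ((k : ℝ) + 1) ≤ b := hmem.1.2
      have hy : (2:ℝ) ^ (-(ρ * ((k : ℝ) + 1))) ≤ d := hmem.2.2
      have hkN : k < N := by
        have : ((k : ℝ) + 1) ≤ Real.logb 2 b :=
          (Real.le_logb_iff_rpow_le one_lt_two hbpos).2 hx
        have h2 : ((k + 1 : ℕ) : ℝ) ≤ Real.logb 2 b := by push_cast; linarith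
        have := Nat.le_floor h2
        omega
      rw [if_pos hkN, Measure.dirac_apply' _ hRm, Set.indicator_of_mem hmem,
        Pi.one_apply, mul_one, ← ENNReal.ofReal_mul (Real.rpow_nonneg hbpos.le _)]
      apply ENNReal.ofReal_le_ofReal
      have hxpos : (0:ℝ) < (2:ℝ) ^ ((k : ℝ) + 1) := Real.rpow_pos_of_pos two_pos _
      have hypos : (0:ℝ) < (2:ℝ) ^ (-(ρ * ((k : ℝ) + 1))) := Real.rpow_pos_of_pos two_pos _
      have hA : (b - a) ^ (α - 1) ≤ b ^ (α - 1) :=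
        Real.rpow_le_rpow_of_nonpos (by linarith : (0:ℝ) < b)
          (by linarith) (by linarith)
      have hB : (d - c) ^ (β - 1) ≤ r ^ (k + 1) := by
        have hd0 : (0:ℝ) < d := lt_of_lt_of_le hypos hy
        have hB1 : (d - c) ^ (β - 1) ≤ ((2:ℝ) ^ (-(ρ * ((k : ℝ) + 1)))) ^ (β - 1) :=
          Real.rpow_le_rpow_of_nonpos hypos (by linarith) (by linarith)
        have hB2 : ((2:ℝ) ^ (-(ρ * ((k : ℝ) + 1)))) ^ (β - 1)
            = (2:ℝ) ^ ((-(ρ * ((k : ℝ) + 1))) * (β - 1)) := by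
          rw [← Real.rpow_mul (by norm_num : (0:ℝ) ≤ 2)]
        have hB3 : (2:ℝ) ^ ((-(ρ * ((k : ℝ) + 1))) * (β - 1))
            ≤ (2:ℝ) ^ (((k : ℝ) + 1) * (1 - α)) := by
          apply Real.rpow_le_rpow_of_exponent_le one_le_two
          have hk1 : (0:ℝ) ≤ (k : ℝ) + 1 := by positivity
          nlinarith [mul_le_mul_of_nonneg_left hρβ hk1]
        have hB4 : (2:ℝ) ^ (((k : ℝ) + 1) * (1 - α)) = r ^ (k + 1) := by
          rw [hrdef, ← Real.rpow_natCast ((2:ℝ) ^ (1 - α)) (k + 1),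
            ← Real.rpow_mul (by norm_num : (0:ℝ) ≤ 2)]
          push_cast
          ring_nf
        calc (d - c) ^ (β - 1) ≤ _ := hB1
          _ = _ := hB2
          _ ≤ _ := hB3
          _ = _ := hB4
      exact mul_le_mul hA hB (Real.rpow_nonneg (by linarith) _)
        (Real.rpow_nonneg hbpos.le _)
    · rw [Measure.dirac_apply' _ hRm, Set.indicator_of_notMem hmem, mul_zero]
      exact zero_le
  -- sum the bounds
  have hrN : r ^ N ≤ b ^ (1 - α) := by
    have hN : (N : ℝ) ≤ Real.logb 2 b := Nat.floor_le hlogb0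
    have h1 : r ^ N = (2:ℝ) ^ ((1 - α) * (N : ℝ)) := by
      rw [hrdef, ← Real.rpow_natCast ((2:ℝ) ^ (1 - α)) N,
        ← Real.rpow_mul (by norm_num : (0:ℝ) ≤ 2)]
    have h2 : (2:ℝ) ^ ((1 - α) * (N : ℝ)) ≤ (2:ℝ) ^ ((1 - α) * Real.logb 2 b) :=
      Real.rpow_le_rpow_of_exponent_le one_le_two
        (mul_le_mul_of_nonneg_left hN h1α.le)
    have h3 : (2:ℝ) ^ ((1 - α) * Real.logb 2 b) = b ^ (1 - α) := by
      rw [mul_comm, Real.rpow_mul (by norm_num : (0:ℝ) ≤ 2),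
        Real.rpow_logb two_pos (by norm_num) hbpos]
    rw [h1]; rw [h3] at h2; exact h2
  have hgeom : ∑ k ∈ Finset.range N, r ^ (k + 1) ≤ r * (b ^ (1 - α) / (r - 1)) := by
    have h1 : ∑ k ∈ Finset.range N, r ^ (k + 1) = r * ((r ^ N - 1) / (r - 1)) := by
      rw [← geom_sum_eq (by linarith : r ≠ 1) N, Finset.mul_sum]
      exact Finset.sum_congr rfl fun k _ => pow_succ' r k
    rw [h1]
    have h2 : r ^ N - 1 ≤ b ^ (1 - α) := by linarith
    gcongr
  calc ENNReal.ofReal ((b - a) ^ (α - 1) * (d - c) ^ (β - 1)) *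
          (omegaRho ρ R) ^ (1 / q : ℝ)
      ≤ ENNReal.ofReal ((b - a) ^ (α - 1) * (d - c) ^ (β - 1)) * omegaRho ρ R :=
        mul_le_mul_right hpow _
    _ = ∑' k : ℕ, ENNReal.ofReal ((b - a) ^ (α - 1) * (d - c) ^ (β - 1)) *
          Measure.dirac (P k) R := by rw [hω, ENNReal.tsum_mul_left]
    _ ≤ ∑' k : ℕ, (if k < N then ENNReal.ofReal (b ^ (α - 1)) *
          ENNReal.ofReal (r ^ (k + 1)) else 0) :=
        ENNReal.tsum_le_tsum hterm
    _ = ∑ k ∈ Finset.range N, (if k < N then ENNReal.ofReal (b ^ (α - 1)) *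
          ENNReal.ofReal (r ^ (k + 1)) else 0) := by
        apply tsum_eq_sum
        intro k hk
        rw [if_neg (by simpa using hk)]
    _ = ENNReal.ofReal (b ^ (α - 1)) *
          ENNReal.ofReal (∑ k ∈ Finset.range N, r ^ (k + 1)) := by
        rw [ENNReal.ofReal_sum_of_nonneg (fun k _ => by positivity), Finset.mul_sum]
        exact Finset.sum_congr rfl fun k hk => by rw [if_pos (Finset.mem_range.1 hk)]
    _ ≤ ENNReal.ofReal (b ^ (α - 1)) * ENNReal.ofReal (r * (b ^ (1 - α) / (r - 1))) :=
        mul_le_mul_right (ENNReal.ofReal_le_ofReal hgeom) _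
    _ = ENNReal.ofReal (r / (r - 1)) := by
        rw [← ENNReal.ofReal_mul (Real.rpow_nonneg hbpos.le _)]
        congr 1
        have hbb : b ^ (α - 1) * b ^ (1 - α) = 1 := by
          rw [← Real.rpow_add hbpos]; norm_num
        calc b ^ (α - 1) * (r * (b ^ (1 - α) / (r - 1)))
            = (b ^ (α - 1) * b ^ (1 - α)) * (r / (r - 1)) := by ring
          _ = r / (r - 1) := by rw [hbb, one_mul]

end
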